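/- Let d ≥ 3 and let G be a connected graph on [n] with diameter at most d and maximum degree Δ ≥ 2. Let Q ⊆ binom([n],2) be a set of queried pairs with |Q| = q. If the number of non-adjacent, non-queried pairs satisfies binom(n,2) − |E(G)| − q > q · ((d−1)Δ^{d−2} + (d−2)^2 Δ^{d−3}), then there exists an undetectable pair in G, i.e., a pair {u1,u2} of non-adjacent vertices with {u1,u2} ∉ Q such that there is no sequence u1, w1, ..., w_ℓ, u2 with ℓ ≤ d−2 in which ℓ of the consecutive pairs are edges of G and the one remaining consecutive pair belongs to Q. -/

import Mathlib

/-- A "path with one queried gap" of length `ℓ+1 ≤ L+1` from `u1` to `u2`: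
a sequence `u1 w1 ... wℓ u2` (with `1 ≤ ℓ ≤ L`) in which `ℓ` of the consecutive pairs
are edges of `G` and the one remaining consecutive pair belongs to `Q`. -/
def HasQueriedGapPath {V : Type*} (G : SimpleGraph V) (Q : Set (Sym2 V)) (L : ℕ)
    (u1 u2 : V) : Prop :=
  ∃ ℓ : ℕ, 1 ≤ ℓ ∧ ℓ ≤ L ∧ ∃ w : Fin (ℓ + 2) → V, w 0 = u1 ∧ w (Fin.last (ℓ + 1)) = u2 ∧
    ∃ j : Fin (ℓ + 1), s(w j.castSucc, w j.succ) ∈ Q ∧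
      ∀ i : Fin (ℓ + 1), i ≠ j → G.Adj (w i.castSucc) (w i.succ)

open Finset

namespace GapProof

variable {V : Type*} [Fintype V] [DecidableEq V] [LinearOrder V]



/-- Any finset of "walks of length k starting at v" has size ≤ Δ^k. -/
lemma walk_count (G : SimpleGraph V) [DecidableRel G.Adj] (v : V) :
    ∀ (k : ℕ) (W : Finset (Fin (k+1) → V)),
    (∀ w ∈ W, w 0 = v ∧ ∀ i : Fin k, G.Adj (w i.castSucc) (w i.succ)) →
    W.card ≤ G.maxDegree ^ k := by
  intro k
  induction k with
  | zero =>
    intro W hW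
    simp only [pow_zero]
    refine Finset.card_le_one.2 fun a ha b hb => ?_
    funext i
    have : i = 0 := Fin.fin_one_eq_zero i
    rw [this, (hW a ha).1, (hW b hb).1]
  | succ k ih =>
    intro W hW
    set f : (Fin (k+2) → V) → (Fin (k+1) → V) := fun w => w ∘ Fin.castSucc with hf
    have himg : ∀ a ∈ W.image f, a 0 = v ∧ ∀ i : Fin k, G.Adj (a i.castSucc) (a i.succ) := by
      intro a ha
      obtain ⟨w, hw, rfl⟩ := Finset.mem_image.1 ha
      obtain ⟨h0, hadj⟩ := hW w hw
      refine ⟨by show w (Fin.castSucc 0) = v; simpa using h0, fun i => ?_⟩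
      have := hadj i.castSucc
      show G.Adj (w i.castSucc.castSucc) (w i.succ.castSucc)
      rw [← Fin.succ_castSucc]; exact this
    have hfib : ∀ a ∈ W.image f, (W.filter fun w => f w = a).card ≤ G.maxDegree := by
      intro a _
      have : (W.filter fun w => f w = a).card ≤ (G.neighborFinset (a (Fin.last k))).card := by
        apply Finset.card_le_card_of_injOn (fun w => w (Fin.last (k+1)))
        · intro w hw
          obtain ⟨hw1, hw2⟩ := Finset.mem_filter.1 hw
          rw [Finset.mem_coe, SimpleGraph.mem_neighborFinset]
          have := (hW w hw1).2 (Fin.last k)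
          have h1 : a (Fin.last k) = w (Fin.castSucc (Fin.last k)) := by rw [← hw2]; rfl
          rw [h1]
          simpa [Fin.succ_last] using this
        · intro w1 h1 w2 h2 hlast
          have hpre : f w1 = f w2 := (Finset.mem_filter.1 h1).2.trans (Finset.mem_filter.1 h2).2.symm
          funext m
          refine Fin.lastCases ?_ ?_ m
          · exact hlast
          · intro i; exact congrFun hpre i
      calc (W.filter fun w => f w = a).card ≤ _ := this
        _ ≤ G.maxDegree := by
            rw [SimpleGraph.card_neighborFinset_eq_degree]
            exact G.degree_le_maxDegree _
    calc W.card ≤ G.maxDegree * (W.image f).card := Finset.card_le_mul_card_image W _ hfib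
      _ ≤ G.maxDegree * G.maxDegree ^ k := Nat.mul_le_mul_left _ (ih _ himg)
      _ = G.maxDegree ^ (k+1) := (pow_succ' _ _).symm



lemma qpair_count (Q : Finset (Sym2 V)) (P : Finset (V × V))
    (hP : ∀ p ∈ P, s(p.1, p.2) ∈ Q) : P.card ≤ 2 * Q.card := by
  have : P.card ≤ (Q ×ˢ (Finset.univ : Finset Bool)).card := by
    apply Finset.card_le_card_of_injOn (fun p => (s(p.1, p.2), decide (p.1 ≤ p.2)))
    · intro p hp
      exact Finset.mem_product.2 ⟨hP p hp, Finset.mem_univ _⟩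
    · rintro ⟨a, b⟩ h1 ⟨c, d⟩ h2 heq
      simp only [Prod.mk.injEq] at heq
      obtain ⟨hs, hb⟩ := heq
      have hb' : (a ≤ b) ↔ (c ≤ d) := by
        rw [← decide_eq_decide]; exact hb
      rw [Sym2.eq_iff] at hs
      rcases hs with ⟨rfl, rfl⟩ | ⟨rfl, rfl⟩
      · rfl
      · have : a = b := by
          rcases le_total a b with h | h
          · exact le_antisymm h (hb'.1 h)
          · exact le_antisymm (hb'.2 h) h
        subst this; rfl
  simpa [mul_comm] using this

lemma gapwalk_count (G : SimpleGraph V) [DecidableRel G.Adj] (Q : Finset (Sym2 V))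
    (ℓ : ℕ) (j : Fin (ℓ+1)) (W : Finset (Fin (ℓ+2) → V))
    (hW : ∀ w ∈ W, s(w j.castSucc, w j.succ) ∈ Q ∧
      ∀ i : Fin (ℓ+1), i ≠ j → G.Adj (w i.castSucc) (w i.succ)) :
    W.card ≤ 2 * Q.card * G.maxDegree ^ ℓ := by
  have hj : j.1 ≤ ℓ := Nat.lt_succ_iff.1 j.isLt
  set e : (Fin (ℓ+2) → V) → V × V := fun w => (w j.castSucc, w j.succ) with he
  -- back and forward walk extractors
  set bk : (Fin (ℓ+2) → V) → (Fin (j.1+1) → V) :=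
    fun w i => w ⟨j.1 - i.1, by omega⟩ with hbk
  set fd : (Fin (ℓ+2) → V) → (Fin (ℓ - j.1 + 1) → V) :=
    fun w i => w ⟨j.1 + 1 + i.1, by have := i.isLt; omega⟩ with hfd
  have hfib : ∀ p ∈ W.image e, (W.filter fun w => e w = p).card ≤ G.maxDegree ^ ℓ := by
    intro p _
    set F := W.filter fun w => e w = p with hF
    have hmemF : ∀ w ∈ F, w ∈ W ∧ w j.castSucc = p.1 ∧ w j.succ = p.2 := by
      intro w hw
      obtain ⟨h1, h2⟩ := Finset.mem_filter.1 hw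
      exact ⟨h1, congrArg Prod.fst h2, congrArg Prod.snd h2⟩
    have hcard : F.card ≤ ((F.image bk) ×ˢ (F.image fd)).card := by
      apply Finset.card_le_card_of_injOn (fun w => (bk w, fd w))
      · intro w hw
        exact Finset.mem_product.2 ⟨Finset.mem_image_of_mem _ hw, Finset.mem_image_of_mem _ hw⟩
      · intro w1 h1 w2 h2 heq
        simp only [Prod.mk.injEq] at heq
        obtain ⟨hb, hf⟩ := heq
        funext m
        by_cases hm : m.1 ≤ j.1
        · have := congrFun hb ⟨j.1 - m.1, by omega⟩
          simp only [hbk] at this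
          have harg : (⟨j.1 - (j.1 - m.1), by omega⟩ : Fin (ℓ+2)) = m :=
            Fin.ext (by simp; omega)
          rwa [harg] at this
        · have hm' : m.1 - j.1 - 1 < ℓ - j.1 + 1 := by have := m.isLt; omega
          have := congrFun hf ⟨m.1 - j.1 - 1, hm'⟩
          simp only [hfd] at this
          have harg : (⟨j.1 + 1 + (m.1 - j.1 - 1), by have := m.isLt; omega⟩ : Fin (ℓ+2)) = m :=
            Fin.ext (by simp; omega)
          rwa [harg] at this
    have hbcard : (F.image bk).card ≤ G.maxDegree ^ j.1 := by
      apply walk_count G p.1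
      intro b hb
      obtain ⟨w, hw, rfl⟩ := Finset.mem_image.1 hb
      obtain ⟨hwW, hw1, hw2⟩ := hmemF w hw
      constructor
      · show w _ = p.1
        rw [← hw1]
        exact congrArg w (Fin.ext (by simp))
      · intro i
        have hi := i.isLt
        have i' : Fin (ℓ+1) := ⟨j.1 - i.1 - 1, by omega⟩
        have hne : (⟨j.1 - i.1 - 1, by omega⟩ : Fin (ℓ+1)) ≠ j :=
          fun h => by have := congrArg Fin.val h; simp at this; omega
        have hadj := ((hW w hwW).2 ⟨j.1 - i.1 - 1, by omega⟩ hne).symm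
        show G.Adj (w _) (w _)
        convert hadj using 2 <;>
          exact Fin.ext (by try simp only [Fin.succ_mk, Fin.castSucc_mk, Fin.val_succ, Fin.coe_castSucc, Fin.val_mk]
                            omega)
    have hfcard : (F.image fd).card ≤ G.maxDegree ^ (ℓ - j.1) := by
      apply walk_count G p.2
      intro b hb
      obtain ⟨w, hw, rfl⟩ := Finset.mem_image.1 hb
      obtain ⟨hwW, hw1, hw2⟩ := hmemF w hw
      constructor
      · show w _ = p.2
        rw [← hw2]
        exact congrArg w (Fin.ext (by simp))
      · intro i
        have hi := i.isLt
        have hne : (⟨j.1 + 1 + i.1, by omega⟩ : Fin (ℓ+1)) ≠ j :=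
          fun h => by have := congrArg Fin.val h; simp at this; omega
        have hadj := (hW w hwW).2 ⟨j.1 + 1 + i.1, by omega⟩ hne
        show G.Adj (w _) (w _)
        convert hadj using 2 <;>
          exact Fin.ext (by (try simp only [Fin.succ_mk, Fin.castSucc_mk, Fin.val_succ, Fin.coe_castSucc, Fin.val_mk]) <;>
                            omega)
    calc F.card ≤ ((F.image bk) ×ˢ (F.image fd)).card := hcard
      _ = (F.image bk).card * (F.image fd).card := Finset.card_product _ _
      _ ≤ G.maxDegree ^ j.1 * G.maxDegree ^ (ℓ - j.1) := Nat.mul_le_mul hbcard hfcard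
      _ = G.maxDegree ^ ℓ := by rw [← pow_add]; congr 1; omega
  have himg : (W.image e).card ≤ 2 * Q.card := by
    apply qpair_count Q
    intro p hp
    obtain ⟨w, hw, rfl⟩ := Finset.mem_image.1 hp
    exact (hW w hw).1
  calc W.card ≤ G.maxDegree ^ ℓ * (W.image e).card := Finset.card_le_mul_card_image W _ hfib
    _ ≤ G.maxDegree ^ ℓ * (2 * Q.card) := Nat.mul_le_mul_left _ himg
    _ = 2 * Q.card * G.maxDegree ^ ℓ := by ring


lemma sum_bound (Δ q L : ℕ) (hΔ : 1 ≤ Δ) (hL : 1 ≤ L) :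
    ∑ ℓ ∈ Finset.Icc 1 L, (ℓ + 1) * (2 * q * Δ ^ ℓ) ≤
      2 * (q * ((L + 1) * Δ ^ L + L ^ 2 * Δ ^ (L - 1))) := by
  have key : ∑ ℓ ∈ Finset.Icc 1 L, (ℓ + 1) * Δ ^ ℓ ≤ (L + 1) * Δ ^ L + L ^ 2 * Δ ^ (L - 1) := by
    obtain ⟨b, rfl⟩ : ∃ b, L = b + 1 := ⟨L - 1, by omega⟩
    rw [Finset.sum_Icc_succ_top (by omega)]
    have h1 : ∑ ℓ ∈ Finset.Icc 1 b, (ℓ + 1) * Δ ^ ℓ ≤ b * ((b + 1) * Δ ^ b) := by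
      have := Finset.sum_le_card_nsmul (Finset.Icc 1 b) (fun ℓ => (ℓ + 1) * Δ ^ ℓ)
        ((b + 1) * Δ ^ b) (fun ℓ hℓ => by
          obtain ⟨h1', h2'⟩ := Finset.mem_Icc.1 hℓ
          exact Nat.mul_le_mul (by omega) (Nat.pow_le_pow_right hΔ h2'))
      simpa [Nat.card_Icc, smul_eq_mul] using this
    have h2 : b * ((b + 1) * Δ ^ b) ≤ (b + 1) ^ 2 * Δ ^ b := by
      rw [pow_two, ← mul_assoc]
      exact Nat.mul_le_mul (Nat.mul_le_mul (Nat.le_succ b) le_rfl) le_rfl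
    simp only [Nat.add_sub_cancel]
    calc ∑ ℓ ∈ Finset.Icc 1 b, (ℓ + 1) * Δ ^ ℓ + (b + 1 + 1) * Δ ^ (b + 1)
        ≤ (b + 1) ^ 2 * Δ ^ b + (b + 1 + 1) * Δ ^ (b + 1) := by omega
      _ = (b + 1 + 1) * Δ ^ (b + 1) + (b + 1) ^ 2 * Δ ^ b := by omega
  calc ∑ ℓ ∈ Finset.Icc 1 L, (ℓ + 1) * (2 * q * Δ ^ ℓ)
      = 2 * q * ∑ ℓ ∈ Finset.Icc 1 L, (ℓ + 1) * Δ ^ ℓ := by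
        rw [Finset.mul_sum]; congr 1; funext ℓ; ring
    _ ≤ 2 * q * ((L + 1) * Δ ^ L + L ^ 2 * Δ ^ (L - 1)) := Nat.mul_le_mul_left _ key
    _ = 2 * (q * ((L + 1) * Δ ^ L + L ^ 2 * Δ ^ (L - 1))) := by ring

lemma two_choose (n : ℕ) : 2 * n.choose 2 = n * n - n := by
  rw [Nat.choose_two_right]
  rcases n with _ | m
  · simp
  · obtain ⟨c, hc⟩ := Nat.even_mul_succ_self m
    have h3 : (m + 1) * (m + 1 - 1) = m * (m + 1) := by rw [Nat.add_sub_cancel, Nat.mul_comm]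
    have h5 : (m + 1) * (m + 1) = (m + 1) * m + (m + 1) := by ring
    have h6 : (m + 1) * m = m * (m + 1) := by ring
    rw [h3]
    omega

end GapProof

/-- If `G` is a connected graph on `[n]` of diameter at most `d ≥ 3` and maximum degree
`Δ ≥ 2`, and the set `Q` of queried pairs has size `q` with
`binom(n,2) - |E(G)| - q > q ((d-1)Δ^{d-2} + (d-2)² Δ^{d-3})`, then `G` has an
undetectable pair. -/
theorem stmt1 {n : ℕ} (d : ℕ) (hd : 3 ≤ d) (G : SimpleGraph (Fin n))
    [DecidableRel G.Adj] [Fintype G.edgeSet]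
    (hconn : G.Connected) (hdiam : ∀ u v : Fin n, G.dist u v ≤ d)
    (hΔ : 2 ≤ G.maxDegree)
    (Q : Finset (Sym2 (Fin n))) (q : ℕ) (hq : Q.card = q)
    (hcount : G.edgeFinset.card + q
        + q * ((d - 1) * G.maxDegree ^ (d - 2) + (d - 2) ^ 2 * G.maxDegree ^ (d - 3))
      < n.choose 2) :
    ∃ u1 u2 : Fin n, u1 ≠ u2 ∧ ¬ G.Adj u1 u2 ∧ s(u1, u2) ∉ Q ∧
      ¬ HasQueriedGapPath G (↑Q) (d - 2) u1 u2 := by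
  classical
  set Δ := G.maxDegree with hΔdef
  set L := d - 2 with hLdef
  have hL1 : 1 ≤ L := by omega
  have hΔ1 : 1 ≤ Δ := by omega
  -- the bad sets
  set X := (d - 1) * Δ ^ (d - 2) + (d - 2) ^ 2 * Δ ^ (d - 3) with hXdef
  set S : Finset (Fin n × Fin n) := Finset.univ.offDiag with hSdef
  set Bad : Finset (Fin n × Fin n) := S.filter
    (fun p => G.Adj p.1 p.2 ∨ s(p.1, p.2) ∈ Q ∨ HasQueriedGapPath G (↑Q) L p.1 p.2) with hBdef
  set A : Finset (Fin n × Fin n) := Finset.univ.filter (fun p => G.Adj p.1 p.2) with hAdef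
  set QP : Finset (Fin n × Fin n) := Finset.univ.filter (fun p => s(p.1, p.2) ∈ Q) with hQPdef
  set GP : Finset (Fin n × Fin n) :=
    Finset.univ.filter (fun p => HasQueriedGapPath G (↑Q) L p.1 p.2) with hGPdef
  -- cardinality of A
  have hA : A.card ≤ 2 * G.edgeFinset.card := by
    apply GapProof.qpair_count
    intro p hp
    have := (Finset.mem_filter.1 hp).2
    rwa [SimpleGraph.mem_edgeFinset, SimpleGraph.mem_edgeSet]
  -- cardinality of QP
  have hQP : QP.card ≤ 2 * q := by
    rw [← hq]
    apply GapProof.qpair_count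
    intro p hp
    exact (Finset.mem_filter.1 hp).2
  -- cardinality of GP
  have hGPex : ∀ ℓ : ℕ,
      (Finset.univ.filter (fun p : Fin n × Fin n =>
        ∃ w : Fin (ℓ + 2) → Fin n, w 0 = p.1 ∧ w (Fin.last (ℓ + 1)) = p.2 ∧
          ∃ j : Fin (ℓ + 1), s(w j.castSucc, w j.succ) ∈ Q ∧
            ∀ i : Fin (ℓ + 1), i ≠ j → G.Adj (w i.castSucc) (w i.succ))).card
        ≤ (ℓ + 1) * (2 * q * Δ ^ ℓ) := by
    intro ℓ
    have hsub : (Finset.univ.filter (fun p : Fin n × Fin n =>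
        ∃ w : Fin (ℓ + 2) → Fin n, w 0 = p.1 ∧ w (Fin.last (ℓ + 1)) = p.2 ∧
          ∃ j : Fin (ℓ + 1), s(w j.castSucc, w j.succ) ∈ Q ∧
            ∀ i : Fin (ℓ + 1), i ≠ j → G.Adj (w i.castSucc) (w i.succ)))
        ⊆ (Finset.univ : Finset (Fin (ℓ + 1))).biUnion (fun j =>
            (Finset.univ.filter (fun w : Fin (ℓ + 2) → Fin n =>
              s(w j.castSucc, w j.succ) ∈ Q ∧
              ∀ i : Fin (ℓ + 1), i ≠ j → G.Adj (w i.castSucc) (w i.succ))).image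
            (fun w => (w 0, w (Fin.last (ℓ + 1))))) := by
      intro p hp
      obtain ⟨w, hw0, hwl, j, hjQ, hadj⟩ := (Finset.mem_filter.1 hp).2
      refine Finset.mem_biUnion.2 ⟨j, Finset.mem_univ _, Finset.mem_image.2 ⟨w, ?_, ?_⟩⟩
      · exact Finset.mem_filter.2 ⟨Finset.mem_univ _, hjQ, hadj⟩
      · rw [hw0, hwl]
    calc _ ≤ _ := Finset.card_le_card hsub
      _ ≤ ∑ j : Fin (ℓ + 1), ((Finset.univ.filter (fun w : Fin (ℓ + 2) → Fin n =>
              s(w j.castSucc, w j.succ) ∈ Q ∧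
              ∀ i : Fin (ℓ + 1), i ≠ j → G.Adj (w i.castSucc) (w i.succ))).image
            (fun w => (w 0, w (Fin.last (ℓ + 1))))).card := Finset.card_biUnion_le
      _ ≤ ∑ _j : Fin (ℓ + 1), 2 * q * Δ ^ ℓ := by
          apply Finset.sum_le_sum
          intro j _
          calc _ ≤ _ := Finset.card_image_le
            _ ≤ 2 * q * Δ ^ ℓ := by
                rw [← hq]
                apply GapProof.gapwalk_count
                intro w hw
                exact (Finset.mem_filter.1 hw).2
      _ = (ℓ + 1) * (2 * q * Δ ^ ℓ) := by
          rw [Finset.sum_const, Finset.card_univ, Fintype.card_fin, smul_eq_mul]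
  have hGP : GP.card ≤ 2 * (q * X) := by
    have hsub : GP ⊆ (Finset.Icc 1 L).biUnion (fun ℓ =>
        Finset.univ.filter (fun p : Fin n × Fin n =>
          ∃ w : Fin (ℓ + 2) → Fin n, w 0 = p.1 ∧ w (Fin.last (ℓ + 1)) = p.2 ∧
            ∃ j : Fin (ℓ + 1), s(w j.castSucc, w j.succ) ∈ Q ∧
              ∀ i : Fin (ℓ + 1), i ≠ j → G.Adj (w i.castSucc) (w i.succ))) := by
      intro p hp
      obtain ⟨ℓ, h1, h2, w, hw0, hwl, j, hjQ, hadj⟩ := (Finset.mem_filter.1 hp).2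
      refine Finset.mem_biUnion.2 ⟨ℓ, Finset.mem_Icc.2 ⟨h1, h2⟩, Finset.mem_filter.2
        ⟨Finset.mem_univ _, w, hw0, hwl, j, Finset.mem_coe.1 hjQ, hadj⟩⟩
    have h1 : GP.card ≤ ∑ ℓ ∈ Finset.Icc 1 L, (ℓ + 1) * (2 * q * Δ ^ ℓ) :=
      (Finset.card_le_card hsub).trans (Finset.card_biUnion_le.trans
        (Finset.sum_le_sum (fun ℓ _ => hGPex ℓ)))
    have h2 := GapProof.sum_bound Δ q L hΔ1 hL1
    have h3 : L + 1 = d - 1 := by omega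
    have h4 : L - 1 = d - 3 := by omega
    have h5 : (L + 1) * Δ ^ L + L ^ 2 * Δ ^ (L - 1) = X := by rw [h3, h4, hXdef, hLdef]
    rw [h5] at h2
    omega
  -- total
  have hBsub : Bad ⊆ (A ∪ QP) ∪ GP := by
    intro p hp
    obtain ⟨hpS, hcase⟩ := Finset.mem_filter.1 hp
    rcases hcase with h | h | h
    · exact Finset.mem_union_left _ (Finset.mem_union_left _
        (Finset.mem_filter.2 ⟨Finset.mem_univ _, h⟩))
    · exact Finset.mem_union_left _ (Finset.mem_union_right _
        (Finset.mem_filter.2 ⟨Finset.mem_univ _, h⟩))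
    · exact Finset.mem_union_right _ (Finset.mem_filter.2 ⟨Finset.mem_univ _, h⟩)
  have hBad : Bad.card ≤ 2 * G.edgeFinset.card + 2 * q + 2 * (q * X) := by
    calc Bad.card ≤ ((A ∪ QP) ∪ GP).card := Finset.card_le_card hBsub
      _ ≤ (A ∪ QP).card + GP.card := Finset.card_union_le _ _
      _ ≤ A.card + QP.card + GP.card := by
          have := Finset.card_union_le A QP
          omega
      _ ≤ _ := by omega
  have hScard : S.card = n * n - n := by
    rw [hSdef, Finset.offDiag_card, Finset.card_univ, Fintype.card_fin]
  have h2c := GapProof.two_choose n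
  have hlt : Bad.card < S.card := by
    rw [hScard]
    have : 2 * (G.edgeFinset.card + q + q * X) < 2 * n.choose 2 :=
      mul_lt_mul_of_pos_left hcount (by omega)
    omega
  have hnotsub : ¬ S ⊆ Bad := fun h => absurd (Finset.card_le_card h) (by omega)
  obtain ⟨p, hpS, hpB⟩ := Finset.not_subset.1 hnotsub
  have hne : p.1 ≠ p.2 := (Finset.mem_offDiag.1 hpS).2.2
  have hnot : ¬ (G.Adj p.1 p.2 ∨ s(p.1, p.2) ∈ Q ∨ HasQueriedGapPath G (↑Q) L p.1 p.2) :=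
    fun h => hpB (Finset.mem_filter.2 ⟨hpS, h⟩)
  push_neg at hnot
  exact ⟨p.1, p.2, hne, hnot.1, hnot.2.1, hnot.2.2⟩
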